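/- arXiv:2303.09313 — 2 statements merged into one kernel-verified Lean document; each statement's English description precedes it below -/
import Mathlib

section
/- For all complex numbers x, y, z not all zero, if x·conj(y)² + y·conj(z)² + z·conj(x)² = 0, then 2·|conj(x)·y·z² + conj(y)·z·x² + conj(z)·x·y²| < |x|⁴ + |y|⁴ + |z|⁴. -/
lemma aux_id (x y z X Y Z : ℂ) (h : x*Y^2 + y*Z^2 + z*X^2 = 0)
    (hc : X*y^2 + Y*z^2 + Z*x^2 = 0) :
    (X*y*z^2 + Y*z*x^2 + Z*x*y^2) * (x*Y*Z^2 + y*Z*X^2 + z*X*Y^2) =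
      (x*X)^3*(z*Z) + (x*X)*(y*Y)^3 + (y*Y)*(z*Z)^3
        - (x*X)^2*(y*Y)^2 - (y*Y)^2*(z*Z)^2 - (z*Z)^2*(x*X)^2 := by
  linear_combination ((z*Z)*((X*y^2+Y*z^2+Z*x^2) - Y*z^2) + (x*X)*((X*y^2+Y*z^2+Z*x^2) - Z*x^2)
      + (y*Y)*((X*y^2+Y*z^2+Z*x^2) - X*y^2)) * h
    - ((z*Z)*(y*Z^2) + (x*X)*(z*X^2) + (y*Y)*(x*Y^2)) * hc

theorem jouanolou_PB_inequality (x y z : ℂ) (h0 : ¬(x = 0 ∧ y = 0 ∧ z = 0))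
    (h : x * (starRingEnd ℂ y)^2 + y * (starRingEnd ℂ z)^2 + z * (starRingEnd ℂ x)^2 = 0) :
    2 * ‖(starRingEnd ℂ x) * y * z^2 + (starRingEnd ℂ y) * z * x^2
        + (starRingEnd ℂ z) * x * y^2‖
      < ‖x‖ ^ 4 + ‖y‖ ^ 4 + ‖z‖ ^ 4 := by
  set B : ℂ := (starRingEnd ℂ x) * y * z^2 + (starRingEnd ℂ y) * z * x^2
      + (starRingEnd ℂ z) * x * y^2 with hBdef
  have hc : (starRingEnd ℂ x) * y^2 + (starRingEnd ℂ y) * z^2 + (starRingEnd ℂ z) * x^2 = 0 := by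
    have := congrArg (starRingEnd ℂ) h
    simpa [map_add, map_mul, map_pow] using this
  have hconjB : (starRingEnd ℂ) B = x * (starRingEnd ℂ y) * (starRingEnd ℂ z)^2
      + y * (starRingEnd ℂ z) * (starRingEnd ℂ x)^2
      + z * (starRingEnd ℂ x) * (starRingEnd ℂ y)^2 := by
    simp [hBdef, map_add, map_mul, map_pow]
  have key : B * (starRingEnd ℂ) B =
      (x * (starRingEnd ℂ x))^3 * (z * (starRingEnd ℂ z))
      + (x * (starRingEnd ℂ x)) * (y * (starRingEnd ℂ y))^3
      + (y * (starRingEnd ℂ y)) * (z * (starRingEnd ℂ z))^3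
      - (x * (starRingEnd ℂ x))^2 * (y * (starRingEnd ℂ y))^2
      - (y * (starRingEnd ℂ y))^2 * (z * (starRingEnd ℂ z))^2
      - (z * (starRingEnd ℂ z))^2 * (x * (starRingEnd ℂ x))^2 := by
    rw [hconjB, hBdef]
    exact aux_id x y z _ _ _ h hc
  rw [Complex.mul_conj, Complex.mul_conj, Complex.mul_conj, Complex.mul_conj] at key
  set a := Complex.normSq x with hadef
  set b := Complex.normSq y with hbdef
  set c := Complex.normSq z with hcdef
  have keyR : Complex.normSq B = a^3*c + a*b^3 + b*c^3 - a^2*b^2 - b^2*c^2 - c^2*a^2 := by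
    have := key
    push_cast at this
    exact_mod_cast this
  have ha : 0 ≤ a := Complex.normSq_nonneg x
  have hb : 0 ≤ b := Complex.normSq_nonneg y
  have hcc : 0 ≤ c := Complex.normSq_nonneg z
  have hpos : 0 < a + b + c := by
    rcases not_and_or.mp h0 with hx | h0'
    · have := Complex.normSq_pos.mpr hx
      linarith
    · rcases not_and_or.mp h0' with hy | hz
      · have := Complex.normSq_pos.mpr hy
        linarith
      · have := Complex.normSq_pos.mpr hz
        linarith
  have habs : ‖B‖ ^ 2 = Complex.normSq B := Complex.sq_norm B
  have habs0 : 0 ≤ ‖B‖ := norm_nonneg B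
  have hx4 : ‖x‖ ^ 4 = a^2 := by
    rw [hadef, ← Complex.sq_norm]; ring
  have hy4 : ‖y‖ ^ 4 = b^2 := by
    rw [hbdef, ← Complex.sq_norm]; ring
  have hz4 : ‖z‖ ^ 4 = c^2 := by
    rw [hcdef, ← Complex.sq_norm]; ring
  rw [hx4, hy4, hz4]
  nlinarith [sq_nonneg (a*(a-3*c)), sq_nonneg (b*(b-3*a)), sq_nonneg (c*(c-3*b)),
    sq_nonneg (a+b+c), sq_nonneg a, sq_nonneg b, sq_nonneg c,
    mul_pos hpos hpos, sq_nonneg (a^2+b^2+c^2 - 2*‖B‖), keyR, habs, habs0,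
    sq_nonneg (a-b), sq_nonneg (b-c), sq_nonneg (a-c)]
end

section
/- For all u, v in the closed unit disk of ℂ, if u·conj(v)² + v + conj(u)² = 0 then |conj(u)·v + conj(v)·u² + u·v²| < (1/2)·(|u|⁴ + |v|⁴ + 1). -/
theorem jouanolou_affine_inequality (u v : ℂ)
    (hu : ‖u‖ ≤ 1) (hv : ‖v‖ ≤ 1)
    (h : u * (starRingEnd ℂ v)^2 + v + (starRingEnd ℂ u)^2 = 0) :
    ‖(starRingEnd ℂ u) * v + (starRingEnd ℂ v) * u^2 + u * v^2‖
      < (1/2) * (‖u‖ ^ 4 + ‖v‖ ^ 4 + 1) := by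
  set a := ‖u‖ with ha
  set b := ‖v‖ with hb
  have ha0 : 0 ≤ a := norm_nonneg u
  have hb0 : 0 ≤ b := norm_nonneg v
  -- key identity : E = (1 - u * conj u) * (conj u * v) + (1 - v * conj v) * (u^2 * conj v)
  have key : (starRingEnd ℂ u) * v + (starRingEnd ℂ v) * u^2 + u * v^2
      = (1 - u * starRingEnd ℂ u) * (starRingEnd ℂ u * v)
        + (1 - v * starRingEnd ℂ v) * (u^2 * starRingEnd ℂ v) := by
    linear_combination u * v * h
  have habs1 : ‖1 - u * starRingEnd ℂ u‖ = 1 - a^2 := by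
    have : (1 : ℂ) - u * starRingEnd ℂ u = ((1 - a^2 : ℝ) : ℂ) := by
      rw [Complex.mul_conj]
      push_cast
      rw [Complex.normSq_eq_norm_sq]
      norm_cast
    rw [this, Complex.norm_real, Real.norm_eq_abs, abs_of_nonneg]
    nlinarith
  have habs2 : ‖1 - v * starRingEnd ℂ v‖ = 1 - b^2 := by
    have : (1 : ℂ) - v * starRingEnd ℂ v = ((1 - b^2 : ℝ) : ℂ) := by
      rw [Complex.mul_conj]
      push_cast
      rw [Complex.normSq_eq_norm_sq]
      norm_cast
    rw [this, Complex.norm_real, Real.norm_eq_abs, abs_of_nonneg]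
    nlinarith
  have hbound : ‖(starRingEnd ℂ u) * v + (starRingEnd ℂ v) * u^2 + u * v^2‖
      ≤ (1 - a^2) * (a * b) + (1 - b^2) * (a^2 * b) := by
    rw [key]
    calc ‖(1 - u * starRingEnd ℂ u) * (starRingEnd ℂ u * v)
          + (1 - v * starRingEnd ℂ v) * (u^2 * starRingEnd ℂ v)‖
        ≤ ‖(1 - u * starRingEnd ℂ u) * (starRingEnd ℂ u * v)‖
          + ‖(1 - v * starRingEnd ℂ v) * (u^2 * starRingEnd ℂ v)‖ :=
          norm_add_le _ _
      _ = (1 - a^2) * (a * b) + (1 - b^2) * (a^2 * b) := by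
          simp only [norm_mul, norm_pow, habs1, habs2, Complex.norm_conj, ← ha, ← hb]
  refine lt_of_le_of_lt hbound ?_
  nlinarith [sq_nonneg (a - b), sq_nonneg (a*b - 1), sq_nonneg (a + b), sq_nonneg (a*b),
    mul_nonneg ha0 hb0, sq_nonneg (a^2 - b^2), sq_nonneg (a^2 + b^2 - 1),
    mul_nonneg (mul_nonneg ha0 hb0) (mul_nonneg ha0 hb0)]
end
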